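/- Cusp formula for the rotation number (second form): Let γ = (x, y, z) : ℝ → ℝ³ be a twice continuously differentiable regular closed Legendrian curve such that y' has only finitely many zeros s₁, …, s_k in [0, 2π), each nondegenerate (y''(sᵢ) ≠ 0). Then rot(γ) equals the sum, over those zeros sᵢ of y' with x'(sᵢ) < 0, of −sign(y''(sᵢ)). (In the front projection this is the count ρ₋ − λ₊ of downward-oriented right cusps minus upward-oriented left cusps.) -/

import Mathlib

open Real Filter

noncomputable section

/-- A regular closed curve in the plane: continuously differentiable,
`2π`-periodic, with nowhere vanishing derivative. -/
def IsRegularClosedCurve (γ : ℝ → ℝ × ℝ) : Prop :=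
  ContDiff ℝ 1 γ ∧ (∀ s, γ (s + 2 * π) = γ s) ∧ ∀ s, deriv γ s ≠ 0

/-- `γ` has rotation number `n`: there is a continuous angle function `θ` for the
velocity vector with `θ (2π) - θ 0 = 2πn`. -/
def HasRotationNumber (γ : ℝ → ℝ × ℝ) (n : ℤ) : Prop :=
  ∃ θ : ℝ → ℝ, Continuous θ ∧
    (∀ s, deriv γ s = ‖deriv γ s‖ • (Real.cos (θ s), Real.sin (θ s))) ∧
    θ (2 * π) - θ 0 = 2 * π * (n : ℝ)

/-- A regular homotopy: a family of regular closed curves, jointly continuous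
in `(s, t)` together with its `s`-derivative, for `t ∈ [0,1]`. -/
def IsRegularHomotopy (Γ : ℝ → ℝ → ℝ × ℝ) : Prop :=
  (∀ t ∈ Set.Icc (0:ℝ) 1, IsRegularClosedCurve (Γ t)) ∧
  ContinuousOn (fun p : ℝ × ℝ => Γ p.2 p.1) (Set.univ ×ˢ Set.Icc (0:ℝ) 1) ∧
  ContinuousOn (fun p : ℝ × ℝ => deriv (Γ p.2) p.1) (Set.univ ×ˢ Set.Icc (0:ℝ) 1)

def RegularlyHomotopic (γ₀ γ₁ : ℝ → ℝ × ℝ) : Prop :=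
  ∃ Γ : ℝ → ℝ → ℝ × ℝ, IsRegularHomotopy Γ ∧ Γ 0 = γ₀ ∧ Γ 1 = γ₁

/-- The coordinate functions of a space curve `γ = (x, y, z) : ℝ → ℝ³`. -/
def curveX (γ : ℝ → ℝ × ℝ × ℝ) : ℝ → ℝ := fun s => (γ s).1
def curveY (γ : ℝ → ℝ × ℝ × ℝ) : ℝ → ℝ := fun s => (γ s).2.1
def curveZ (γ : ℝ → ℝ × ℝ × ℝ) : ℝ → ℝ := fun s => (γ s).2.2

/-- The Legendrian condition `z' + x·y' ≡ 0` for the standard contact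
structure `ξ = ker (dz + x dy)` on `ℝ³`. -/
def IsLegendrian (γ : ℝ → ℝ × ℝ × ℝ) : Prop :=
  ∀ s, deriv (curveZ γ) s + curveX γ s * deriv (curveY γ) s = 0

/-- A regular closed Legendrian curve in `(ℝ³, ξ)`. -/
def IsRegularClosedLegendrian (γ : ℝ → ℝ × ℝ × ℝ) : Prop :=
  ContDiff ℝ 1 γ ∧ (∀ s, γ (s + 2 * π) = γ s) ∧ (∀ s, deriv γ s ≠ 0) ∧ IsLegendrian γ

/-- The Lagrangian projection `(x, y, z) ↦ (x, y)`. -/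
def LagrangianProj (γ : ℝ → ℝ × ℝ × ℝ) : ℝ → ℝ × ℝ :=
  fun s => ((γ s).1, (γ s).2.1)

/-- The rotation number of a Legendrian curve, measured in the frame
`e₁ = ∂ₓ`, `e₂ = ∂_y - x ∂_z` of `ξ`, in which `γ'` has coefficients `(x', y')`. -/
def HasLegendrianRotationNumber (γ : ℝ → ℝ × ℝ × ℝ) (n : ℤ) : Prop :=
  ∃ θ : ℝ → ℝ, Continuous θ ∧
    (∀ s, (deriv (curveX γ) s, deriv (curveY γ) s) =
      ‖(deriv (curveX γ) s, deriv (curveY γ) s)‖ • (Real.cos (θ s), Real.sin (θ s))) ∧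
    θ (2 * π) - θ 0 = 2 * π * (n : ℝ)

/-- A Legendrian regular homotopy: a family of regular closed Legendrian
curves, jointly continuous in `(s,t)` together with its `s`-derivative. -/
def IsLegendrianRegularHomotopy (Γ : ℝ → ℝ → ℝ × ℝ × ℝ) : Prop :=
  (∀ t ∈ Set.Icc (0:ℝ) 1, IsRegularClosedLegendrian (Γ t)) ∧
  ContinuousOn (fun p : ℝ × ℝ => Γ p.2 p.1) (Set.univ ×ˢ Set.Icc (0:ℝ) 1) ∧
  ContinuousOn (fun p : ℝ × ℝ => deriv (Γ p.2) p.1) (Set.univ ×ˢ Set.Icc (0:ℝ) 1)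

def LegendrianRegularlyHomotopic (γ₀ γ₁ : ℝ → ℝ × ℝ × ℝ) : Prop :=
  ∃ Γ : ℝ → ℝ → ℝ × ℝ × ℝ, IsLegendrianRegularHomotopy Γ ∧ Γ 0 = γ₀ ∧ Γ 1 = γ₁

/-- **Cusp formula (second form):** `rot γ = ρ₋ - λ₊`, i.e. the rotation number
is the signed count, over the zeros `s` of `y'` in `[0, 2π)` with `x'(s) < 0`,
of `-sign (y''(s))`. -/

lemma const_of_locConst (φ : ℝ → ℤ) (u v : ℝ) (huv : u ≤ v)
    (h : ∀ x ∈ Set.Icc u v, ∀ᶠ s in nhds x, φ s = φ x) : φ u = φ v := by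
  have hcont : ContinuousOn φ (Set.Icc u v) := fun x hx =>
    (Filter.EventuallyEq.continuousAt (h x hx)).continuousWithinAt
  have hpc : IsPreconnected (φ '' Set.Icc u v) := (isPreconnected_Icc).image φ hcont
  exact hpc.subsingleton (Set.mem_image_of_mem φ (Set.left_mem_Icc.2 huv))
    (Set.mem_image_of_mem φ (Set.right_mem_Icc.2 huv))

lemma telescope_jumps (φ : ℝ → ℤ) (jump : ℝ → ℤ) :
    ∀ (T : Finset ℝ) (a b : ℝ), a ≤ b → ↑T ⊆ Set.Ioo a b →
    (∀ x ∈ Set.Icc a b, x ∉ T → ∀ᶠ s in nhds x, φ s = φ x) →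
    (∀ t ∈ T, ∃ m : ℤ, (∀ᶠ s in nhdsWithin t (Set.Iio t), φ s = m) ∧
              (∀ᶠ s in nhdsWithin t (Set.Ioi t), φ s = m + jump t)) →
    φ b - φ a = ∑ t ∈ T, jump t := by
  intro T
  induction T using Finset.induction_on_max with
  | empty =>
    intro a b hab _ hconst _
    simp only [Finset.sum_empty]
    rw [const_of_locConst φ a b hab (fun x hx => hconst x hx (by simp))]
    ring
  | insert t s hts ih =>
    intro a b hab hsub hconst hcross
    have htmem : t ∈ Set.Ioo a b := hsub (by simp)
    have htns : t ∉ s := fun h => lt_irrefl t (hts t h)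
    obtain ⟨m, hleft, hright⟩ := hcross t (Finset.mem_insert_self t s)
    rw [eventually_nhdsWithin_iff, Metric.eventually_nhds_iff] at hleft hright
    obtain ⟨w, hw, hwball⟩ := hleft
    obtain ⟨w', hw', hwball'⟩ := hright
    set v₀ : ℝ := (insert a s).max' (Finset.insert_nonempty a s) with hv₀def
    have hv₀lt : v₀ < t := by
      have := Finset.max'_mem (insert a s) (Finset.insert_nonempty a s)
      rw [← hv₀def] at this
      rcases Finset.mem_insert.1 this with h | h
      · rw [h]; exact htmem.1
      · exact hts _ h
    have hav₀ : a ≤ v₀ := Finset.le_max' _ a (Finset.mem_insert_self a s)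
    have hsv₀ : ∀ x ∈ s, x ≤ v₀ := fun x hx => Finset.le_max' _ x (Finset.mem_insert_of_mem hx)
    set v : ℝ := max ((v₀ + t)/2) (t - w/2) with hvdef
    have hv₀v : v₀ < v := lt_of_lt_of_le (by linarith) (le_max_left _ _)
    have hvt : v < t := max_lt (by linarith) (by linarith)
    have hvball : dist v t < w := by
      rw [Real.dist_eq, abs_lt]
      constructor
      · have : t - w/2 ≤ v := le_max_right _ _
        linarith
      · linarith
    have hφv : φ v = m := hwball hvball hvt
    set u : ℝ := min ((t + b)/2) (t + w'/2) with hudef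
    have htu : t < u := lt_min (by linarith [htmem.2]) (by linarith)
    have hub : u < b := lt_of_le_of_lt (min_le_left _ _) (by linarith [htmem.2])
    have huball : dist u t < w' := by
      rw [Real.dist_eq, abs_lt]
      constructor
      · linarith
      · have : u ≤ t + w'/2 := min_le_right _ _
        linarith
    have hφu : φ u = m + jump t := hwball' huball htu
    have hφb : φ u = φ b := by
      apply const_of_locConst φ u b (le_of_lt hub)
      intro x hx
      apply hconst x ⟨le_trans (le_of_lt htmem.1) (le_trans (le_of_lt htu) hx.1), hx.2⟩
      intro hmem
      rcases Finset.mem_insert.1 hmem with h | h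
      · exact absurd (h ▸ hx.1) (not_le.2 htu)
      · exact absurd (lt_of_lt_of_le (lt_of_lt_of_le (hts x h) (le_of_lt htu)) hx.1)
          (lt_irrefl x)
    have hva : φ v - φ a = ∑ x ∈ s, jump x := by
      apply ih a v (le_trans hav₀ (le_of_lt hv₀v))
      · intro x hx
        exact ⟨(hsub (Finset.mem_coe.2 (Finset.mem_insert_of_mem hx))).1,
          lt_of_le_of_lt (hsv₀ x hx) hv₀v⟩
      · intro x hx hxs
        apply hconst x ⟨hx.1, le_trans hx.2 (le_trans (le_of_lt hvt) (le_of_lt htmem.2))⟩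
        intro hmem
        rcases Finset.mem_insert.1 hmem with h | h
        · exact absurd (h ▸ hx.2) (not_le.2 hvt)
        · exact hxs h
      · intro x hx
        exact hcross x (Finset.mem_insert_of_mem hx)
    rw [Finset.sum_insert htns]
    have : φ b = m + jump t := hφb ▸ hφu
    omega

lemma deriv_shift {E : Type*} [NormedAddCommGroup E] [NormedSpace ℝ E]
    (f : ℝ → E) (c x : ℝ) (h : ∀ s, f (s + c) = f s) : deriv f (x + c) = deriv f x := by
  conv_rhs => rw [← funext h]
  rw [deriv_comp_add_const]

lemma angle_diff_int (a b : ℝ) (h1 : Real.cos a = Real.cos b) (h2 : Real.sin a = Real.sin b) :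
    ∃ k : ℤ, a - b = k * (2 * π) := by
  have he : Complex.exp (a * Complex.I) = Complex.exp (b * Complex.I) := by
    rw [Complex.exp_mul_I, Complex.exp_mul_I, ← Complex.ofReal_cos, ← Complex.ofReal_cos,
      ← Complex.ofReal_sin, ← Complex.ofReal_sin, h1, h2]
  obtain ⟨k, hk⟩ := Complex.exp_eq_exp_iff_exists_int.1 he
  refine ⟨k, ?_⟩
  have := congrArg Complex.im hk
  simp at this; linarith

lemma floor_near (θt u : ℝ) (j : ℤ) (hθt : θt = j * (2*π) - π)
    (hu1 : -π < u) (hu2 : u < π) :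
    (0 < Real.sin (θt + u) → ⌊(θt + u + π)/(2*π)⌋ = j - 1) ∧
    (Real.sin (θt + u) < 0 → ⌊(θt + u + π)/(2*π)⌋ = j) := by
  have hπ := Real.pi_pos
  have hsin : Real.sin (θt + u) = -Real.sin u := by
    rw [hθt]
    have : (j:ℝ) * (2*π) - π + u = (u - π) + j * (2*π) := by ring
    rw [this]
    rw [Real.sin_add_int_mul_two_pi, Real.sin_sub, Real.cos_pi, Real.sin_pi]
    ring
  constructor
  · intro hpos
    have husin : Real.sin u < 0 := by rw [hsin] at hpos; linarith
    have hu0 : u < 0 := by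
      by_contra h
      exact absurd (Real.sin_nonneg_of_nonneg_of_le_pi (not_lt.1 h) (le_of_lt hu2))
        (not_le.2 husin)
    rw [Int.floor_eq_iff]
    push_cast
    rw [hθt]
    constructor
    · rw [le_div_iff₀ Real.two_pi_pos]; ring_nf; nlinarith
    · rw [div_lt_iff₀ Real.two_pi_pos]; ring_nf; nlinarith
  · intro hneg
    have husin : 0 < Real.sin u := by rw [hsin] at hneg; linarith
    have hu0 : 0 < u := by
      by_contra h
      have : Real.sin (-u) ≥ 0 := Real.sin_nonneg_of_nonneg_of_le_pi (by linarith [not_lt.1 h]) (by linarith)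
      rw [Real.sin_neg] at this
      linarith
    rw [Int.floor_eq_iff]
    push_cast
    rw [hθt]
    constructor
    · rw [le_div_iff₀ Real.two_pi_pos]; ring_nf; nlinarith
    · rw [div_lt_iff₀ Real.two_pi_pos]; ring_nf; nlinarith

lemma crossing_local (θ : ℝ → ℝ) (hθc : Continuous θ) (Y' r : ℝ → ℝ)
    (hr : ∀ s, 0 < r s) (hY : ∀ s, Y' s = r s * Real.sin (θ s))
    (t : ℝ) (j : ℤ) (hθt : θ t = j * (2*π) - π)
    (D : ℝ) (hY'd : HasDerivAt Y' D t) (hD : D ≠ 0) :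
    ∃ m : ℤ, (∀ᶠ s in nhdsWithin t (Set.Iio t), ⌊(θ s + π)/(2*π)⌋ = m) ∧
      (∀ᶠ s in nhdsWithin t (Set.Ioi t), ⌊(θ s + π)/(2*π)⌋ = m + (if 0 < D then -1 else 1)) := by
  have hπ := Real.pi_pos
  have hY't : Y' t = 0 := by
    rw [hY, hθt]
    have : (j:ℝ) * (2*π) - π = -π + j * (2*π) := by ring
    rw [this, Real.sin_add_int_mul_two_pi, Real.sin_neg, Real.sin_pi]
    ring
  -- nearness of θ
  have hnear : ∀ᶠ s in nhds t, |θ s - θ t| < π := by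
    have h1 : ∀ᶠ y in nhds (θ t), |y - θ t| < π := by
      have : Metric.ball (θ t) π ∈ nhds (θ t) := Metric.ball_mem_nhds _ hπ
      filter_upwards [this] with y hy
      rwa [Metric.mem_ball, Real.dist_eq] at hy
    exact (hθc.tendsto t).eventually h1
  -- floor values from sign of sin
  have hfl : ∀ s, |θ s - θ t| < π → 0 < Real.sin (θ s) → ⌊(θ s + π)/(2*π)⌋ = j - 1 := by
    intro s habs hpos
    have h := (floor_near (θ t) (θ s - θ t) j hθt (by cases abs_lt.1 habs; linarith)
      (by cases abs_lt.1 habs; linarith)).1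
    have : θ t + (θ s - θ t) = θ s := by ring
    rw [this] at h
    exact h hpos
  have hfr : ∀ s, |θ s - θ t| < π → Real.sin (θ s) < 0 → ⌊(θ s + π)/(2*π)⌋ = j := by
    intro s habs hneg
    have h := (floor_near (θ t) (θ s - θ t) j hθt (by cases abs_lt.1 habs; linarith)
      (by cases abs_lt.1 habs; linarith)).2
    have : θ t + (θ s - θ t) = θ s := by ring
    rw [this] at h
    exact h hneg
  have hsins : ∀ s, (0 < Y' s ↔ 0 < Real.sin (θ s)) ∧ (Y' s < 0 ↔ Real.sin (θ s) < 0) := by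
    intro s
    rw [hY s]
    constructor
    · constructor
      · intro h; nlinarith [hr s]
      · intro h; exact mul_pos (hr s) h
    · constructor
      · intro h; nlinarith [hr s]
      · intro h; exact mul_neg_of_pos_of_neg (hr s) h
  have hslope := hasDerivAt_iff_tendsto_slope.1 hY'd
  have hIio : nhdsWithin t (Set.Iio t) ≤ nhdsWithin t {t}ᶜ :=
    nhdsWithin_mono t (fun x hx => ne_of_lt hx)
  have hIoi : nhdsWithin t (Set.Ioi t) ≤ nhdsWithin t {t}ᶜ :=
    nhdsWithin_mono t (fun x (hx : t < x) => Set.mem_compl_singleton_iff.2 (ne_of_gt hx))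
  rcases lt_or_gt_of_ne hD with hDneg | hDpos
  · -- D < 0 : jump = 1, m = j - 1
    have hif : (if 0 < D then (-1:ℤ) else 1) = 1 := by rw [if_neg (not_lt.2 (le_of_lt hDneg))]
    refine ⟨j - 1, ?_, ?_⟩
    · -- left of t: slope < 0, s < t ⇒ Y' s > 0 ⇒ floor = j - 1
      have hev : ∀ᶠ s in nhdsWithin t {t}ᶜ, slope Y' t s < 0 :=
        hslope.eventually (eventually_lt_nhds hDneg)
      filter_upwards [hev.filter_mono hIio, self_mem_nhdsWithin,
        hnear.filter_mono nhdsWithin_le_nhds] with s hs hst hne2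
      rw [slope_def_field, hY't, sub_zero] at hs
      have hYs : 0 < Y' s := by
        rcases div_neg_iff.1 hs with ⟨h1, h2⟩ | ⟨h1, h2⟩
        · exact h1
        · have : s - t < 0 := sub_neg.2 hst; linarith
      exact hfl s hne2 ((hsins s).1.1 hYs)
    · -- right of t: slope < 0, s > t ⇒ Y' s < 0 ⇒ floor = j = (j-1) + 1
      rw [hif]
      have hev : ∀ᶠ s in nhdsWithin t {t}ᶜ, slope Y' t s < 0 :=
        hslope.eventually (eventually_lt_nhds hDneg)
      filter_upwards [hev.filter_mono hIoi, self_mem_nhdsWithin,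
        hnear.filter_mono nhdsWithin_le_nhds] with s hs hst hne2
      rw [slope_def_field, hY't, sub_zero] at hs
      have hYs : Y' s < 0 := by
        rcases div_neg_iff.1 hs with ⟨h1, h2⟩ | ⟨h1, h2⟩
        · have : 0 < s - t := sub_pos.2 hst; linarith
        · exact h1
      rw [hfr s hne2 ((hsins s).2.1 hYs)]
      ring
  · -- D > 0 : jump = -1, m = j
    have hif : (if 0 < D then (-1:ℤ) else 1) = -1 := by rw [if_pos hDpos]
    refine ⟨j, ?_, ?_⟩
    · -- left of t: slope > 0, s < t ⇒ Y' s < 0 ⇒ floor = j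
      have hev : ∀ᶠ s in nhdsWithin t {t}ᶜ, 0 < slope Y' t s :=
        hslope.eventually (eventually_gt_nhds hDpos)
      filter_upwards [hev.filter_mono hIio, self_mem_nhdsWithin,
        hnear.filter_mono nhdsWithin_le_nhds] with s hs hst hne2
      rw [slope_def_field, hY't, sub_zero] at hs
      have hYs : Y' s < 0 := by
        rcases div_pos_iff.1 hs with ⟨h1, h2⟩ | ⟨h1, h2⟩
        · have : s - t < 0 := sub_neg.2 hst; linarith
        · exact h1
      exact hfr s hne2 ((hsins s).2.1 hYs)
    · -- right of t: slope > 0, s > t ⇒ Y' s > 0 ⇒ floor = j - 1 = j + (-1)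
      rw [hif]
      have hev : ∀ᶠ s in nhdsWithin t {t}ᶜ, 0 < slope Y' t s :=
        hslope.eventually (eventually_gt_nhds hDpos)
      filter_upwards [hev.filter_mono hIoi, self_mem_nhdsWithin,
        hnear.filter_mono nhdsWithin_le_nhds] with s hs hst hne2
      rw [slope_def_field, hY't, sub_zero] at hs
      have hYs : 0 < Y' s := by
        rcases div_pos_iff.1 hs with ⟨h1, h2⟩ | ⟨h1, h2⟩
        · exact h1
        · have : 0 < s - t := sub_pos.2 hst; linarith
      rw [hfl s hne2 ((hsins s).1.1 hYs)]
      ring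

theorem rot_eq_rightDown_sub_leftUp (γ : ℝ → ℝ × ℝ × ℝ)
    (hsm : ContDiff ℝ 2 γ) (hreg : IsRegularClosedLegendrian γ)
    (S : Finset ℝ) (hSsub : ↑S ⊆ Set.Ico (0:ℝ) (2 * π))
    (hS : ∀ s ∈ Set.Ico (0:ℝ) (2 * π), (deriv (curveY γ) s = 0 ↔ s ∈ S))
    (hnd : ∀ s ∈ S, deriv (deriv (curveY γ)) s ≠ 0)
    (n : ℤ) (hn : HasLegendrianRotationNumber γ n) :
    n = ∑ s ∈ S.filter (fun s => deriv (curveX γ) s < 0),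
          (if 0 < deriv (deriv (curveY γ)) s then (-1 : ℤ) else 1) := by
  classical
  obtain ⟨hγ1, hγper, hγne, hγleg⟩ := hreg
  obtain ⟨θ, hθc, hθeq, hθrot⟩ := hn
  have hπ := Real.pi_pos
  have hγd : Differentiable ℝ γ := hsm.differentiable (by norm_num)
  -- component derivatives
  have hXeq : ∀ s, deriv (curveX γ) s = (deriv γ s).1 := by
    intro s
    have h : HasDerivAt (curveX γ) ((deriv γ s).1) s := ((hγd s).hasDerivAt).fst
    exact h.deriv
  have hYeq : ∀ s, deriv (curveY γ) s = (deriv γ s).2.1 := by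
    intro s
    have h : HasDerivAt (curveY γ) ((deriv γ s).2.1) s := ((hγd s).hasDerivAt).snd.fst
    exact h.deriv
  have hZeq : ∀ s, deriv (curveZ γ) s = (deriv γ s).2.2 := by
    intro s
    have h : HasDerivAt (curveZ γ) ((deriv γ s).2.2) s := ((hγd s).hasDerivAt).snd.snd
    exact h.deriv
  -- nonvanishing of (x', y')
  have hpair : ∀ s, ¬(deriv (curveX γ) s = 0 ∧ deriv (curveY γ) s = 0) := by
    rintro s ⟨hx, hy⟩
    have hz : deriv (curveZ γ) s = 0 := by
      have := hγleg s; rw [hy] at this; linarith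
    apply hγne s
    have heta : deriv γ s = ((deriv γ s).1, (deriv γ s).2.1, (deriv γ s).2.2) := rfl
    rw [heta, ← hXeq, ← hYeq, ← hZeq, hx, hy, hz]
    rfl
  have hrpos : ∀ s, (0:ℝ) < ‖(deriv (curveX γ) s, deriv (curveY γ) s)‖ := by
    intro s
    rw [norm_pos_iff]
    intro h
    exact hpair s ⟨congrArg Prod.fst h, congrArg Prod.snd h⟩
  -- the angle equations
  have hcos : ∀ s, deriv (curveX γ) s
      = ‖(deriv (curveX γ) s, deriv (curveY γ) s)‖ * Real.cos (θ s) := by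
    intro s
    have := congrArg Prod.fst (hθeq s)
    simpa using this
  have hsin : ∀ s, deriv (curveY γ) s
      = ‖(deriv (curveX γ) s, deriv (curveY γ) s)‖ * Real.sin (θ s) := by
    intro s
    have := congrArg Prod.snd (hθeq s)
    simpa using this
  -- periodicity of derivatives
  have hdper : ∀ s, deriv γ (s + 2*π) = deriv γ s := by
    intro s
    have := deriv_shift γ (2*π) s (fun u => by rw [hγper u])
    simpa using this
  have hXper : ∀ s, deriv (curveX γ) (s + 2*π) = deriv (curveX γ) s := by
    intro s; rw [hXeq, hXeq, hdper]
  have hYper : ∀ s, deriv (curveY γ) (s + 2*π) = deriv (curveY γ) s := by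
    intro s; rw [hYeq, hYeq, hdper]
  have hY2per : ∀ s, deriv (deriv (curveY γ)) (s + 2*π) = deriv (deriv (curveY γ)) s := by
    intro s
    exact deriv_shift (deriv (curveY γ)) (2*π) s hYper
  have hnormper : ∀ s, ‖(deriv (curveX γ) (s + 2*π), deriv (curveY γ) (s + 2*π))‖
      = ‖(deriv (curveX γ) s, deriv (curveY γ) s)‖ := by
    intro s; rw [hXper, hYper]
  have hcs : ∀ s, Real.cos (θ (s + 2*π)) = Real.cos (θ s) := by
    intro s
    apply mul_left_cancel₀ (ne_of_gt (hrpos s))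
    calc ‖(deriv (curveX γ) s, deriv (curveY γ) s)‖ * Real.cos (θ (s + 2*π))
        = ‖(deriv (curveX γ) (s + 2*π), deriv (curveY γ) (s + 2*π))‖ * Real.cos (θ (s + 2*π)) := by
          rw [hnormper]
      _ = deriv (curveX γ) (s + 2*π) := (hcos (s + 2*π)).symm
      _ = deriv (curveX γ) s := hXper s
      _ = ‖(deriv (curveX γ) s, deriv (curveY γ) s)‖ * Real.cos (θ s) := hcos s
  have hsn : ∀ s, Real.sin (θ (s + 2*π)) = Real.sin (θ s) := by
    intro s
    apply mul_left_cancel₀ (ne_of_gt (hrpos s))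
    calc ‖(deriv (curveX γ) s, deriv (curveY γ) s)‖ * Real.sin (θ (s + 2*π))
        = ‖(deriv (curveX γ) (s + 2*π), deriv (curveY γ) (s + 2*π))‖ * Real.sin (θ (s + 2*π)) := by
          rw [hnormper]
      _ = deriv (curveY γ) (s + 2*π) := (hsin (s + 2*π)).symm
      _ = deriv (curveY γ) s := hYper s
      _ = ‖(deriv (curveX γ) s, deriv (curveY γ) s)‖ * Real.sin (θ s) := hsin s
  have hshift : ∀ s, θ (s + 2*π) = θ s + 2*π*(n:ℝ) := by
    have hgc : Continuous (fun s => θ (s + 2*π) - θ s) :=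
      (hθc.comp (continuous_id.add continuous_const)).sub hθc
    have hgint : ∀ s, ∃ k:ℤ, θ (s + 2*π) - θ s = k * (2*π) :=
      fun s => angle_diff_int _ _ (hcs s) (hsn s)
    have hgconst : ∀ s, θ (s + 2*π) - θ s = θ (0 + 2*π) - θ 0 := by
      intro s
      by_contra hne
      have himg : IsPreconnected ((fun u => θ (u + 2*π) - θ u) '' Set.univ) :=
        isPreconnected_univ.image _ hgc.continuousOn
      obtain ⟨k, hk⟩ := hgint s
      obtain ⟨k0, hk0⟩ := hgint 0
      have hkk0 : k ≠ k0 := fun h => hne (by rw [hk, hk0, h])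
      rcases lt_or_gt_of_ne hkk0 with hlt | hlt
      · have h1 : θ (s + 2*π) - θ s + π ∈
            Set.Icc (θ (s + 2*π) - θ s) (θ (0 + 2*π) - θ 0) := by
          refine ⟨by linarith, ?_⟩
          rw [hk, hk0]
          have : (k:ℝ) + 1 ≤ k0 := by exact_mod_cast hlt
          nlinarith
        obtain ⟨x, -, hx⟩ := himg.Icc_subset (Set.mem_image_of_mem _ (Set.mem_univ s))
          (Set.mem_image_of_mem _ (Set.mem_univ 0)) h1
        simp only at hx
        obtain ⟨k2, hk2⟩ := hgint x
        rw [hk2, hk] at hx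
        have h2 : ((2*(k2 - k) : ℤ):ℝ) * π = 1 * π := by push_cast; nlinarith
        have h3 : (2*(k2 - k) : ℤ) = 1 := by
          have := mul_right_cancel₀ (ne_of_gt hπ) h2
          exact_mod_cast this
        omega
      · have h1 : θ (0 + 2*π) - θ 0 + π ∈
            Set.Icc (θ (0 + 2*π) - θ 0) (θ (s + 2*π) - θ s) := by
          refine ⟨by linarith, ?_⟩
          rw [hk, hk0]
          have : (k0:ℝ) + 1 ≤ k := by exact_mod_cast hlt
          nlinarith
        obtain ⟨x, -, hx⟩ := himg.Icc_subset (Set.mem_image_of_mem _ (Set.mem_univ 0))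
          (Set.mem_image_of_mem _ (Set.mem_univ s)) h1
        simp only at hx
        obtain ⟨k2, hk2⟩ := hgint x
        rw [hk2, hk0] at hx
        have h2 : ((2*(k2 - k0) : ℤ):ℝ) * π = 1 * π := by push_cast; nlinarith
        have h3 : (2*(k2 - k0) : ℤ) = 1 := by
          have := mul_right_cancel₀ (ne_of_gt hπ) h2
          exact_mod_cast this
        omega
    intro s
    have h := hgconst s
    rw [zero_add] at h
    rw [hθrot] at h
    linarith
  -- crossing characterization
  have hodd_fwd : ∀ x (j : ℤ), θ x = j*(2*π) - π →
      deriv (curveY γ) x = 0 ∧ deriv (curveX γ) x < 0 := by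
    intro x j hx
    have hrw : (j:ℝ)*(2*π) - π = -π + j*(2*π) := by ring
    have hsx : Real.sin (θ x) = 0 := by
      rw [hx, hrw, Real.sin_add_int_mul_two_pi, Real.sin_neg, Real.sin_pi, neg_zero]
    have hcx : Real.cos (θ x) = -1 := by
      rw [hx, hrw, Real.cos_add_int_mul_two_pi, Real.cos_neg, Real.cos_pi]
    constructor
    · rw [hsin, hsx, mul_zero]
    · rw [hcos, hcx]
      have := hrpos x
      nlinarith
  have hodd_bwd : ∀ x, deriv (curveY γ) x = 0 → deriv (curveX γ) x < 0 →
      ∃ j : ℤ, θ x = j*(2*π) - π := by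
    intro x hy hxlt
    have hsx : Real.sin (θ x) = 0 := by
      have h0 : (0:ℝ) = ‖(deriv (curveX γ) x, deriv (curveY γ) x)‖ * Real.sin (θ x) := by
        rw [← hy]; exact hsin x
      rcases mul_eq_zero.1 h0.symm with h | h
      · exact absurd h (ne_of_gt (hrpos x))
      · exact h
    have hcx : Real.cos (θ x) = -1 := by
      have hsq : Real.cos (θ x)^2 = 1 := by
        have := Real.sin_sq_add_cos_sq (θ x)
        rw [hsx] at this; nlinarith
      have hcneg : Real.cos (θ x) < 0 := by
        have := hcos x
        rw [this] at hxlt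
        by_contra h
        nlinarith [hrpos x, not_lt.1 h]
      nlinarith
    have : Real.cos (θ x + π) = 1 := by
      rw [Real.cos_add_pi, hcx]; ring
    obtain ⟨j, hj⟩ := (Real.cos_eq_one_iff _).1 this
    exact ⟨j, by linarith⟩
  -- the counting function
  set φ : ℝ → ℤ := fun s => ⌊(θ s + π)/(2*π)⌋ with hφdef
  have hφshift : ∀ s, φ (s + 2*π) = φ s + n := by
    intro s
    show ⌊(θ (s + 2*π) + π)/(2*π)⌋ = ⌊(θ s + π)/(2*π)⌋ + n
    rw [hshift]
    have : (θ s + 2*π*(n:ℝ) + π)/(2*π) = (θ s + π)/(2*π) + (n:ℝ) := by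
      field_simp
      ring
    rw [this]
    exact_mod_cast Int.floor_add_intCast _ n
  -- base point
  obtain ⟨c, hcIco, hcS⟩ : ∃ c, c ∈ Set.Ico (0:ℝ) (2*π) ∧ c ∉ S := by
    have hinf : (Set.Ico (0:ℝ) (2*π)).Infinite := Set.Ico_infinite (by linarith)
    obtain ⟨c, hc⟩ := (hinf.diff S.finite_toSet).nonempty
    exact ⟨c, hc.1, hc.2⟩
  set C := S.filter (fun s => deriv (curveX γ) s < 0) with hCdef
  set e : ℝ → ℝ := fun s => if c < s then s else s + 2*π with hedef
  set T := C.image e with hTdef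
  have hCmem : ∀ s ∈ C, 0 ≤ s ∧ s < 2*π ∧ deriv (curveY γ) s = 0 ∧
      deriv (curveX γ) s < 0 ∧ deriv (deriv (curveY γ)) s ≠ 0 := by
    intro s hs
    obtain ⟨hsS, hsx⟩ := Finset.mem_filter.1 hs
    have hico := hSsub hsS
    exact ⟨hico.1, hico.2, (hS s hico).2 hsS, hsx, hnd s hsS⟩
  -- membership used for local constancy
  have hTmem : ∀ x ∈ Set.Icc c (c + 2*π), deriv (curveY γ) x = 0 →
      deriv (curveX γ) x < 0 → x ∈ T := by
    intro x hx hy hxlt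
    by_cases hlt : x < 2*π
    · have hx0 : 0 ≤ x := le_trans hcIco.1 hx.1
      have hxS : x ∈ S := (hS x ⟨hx0, hlt⟩).1 hy
      have hxC : x ∈ C := Finset.mem_filter.2 ⟨hxS, hxlt⟩
      have hcx : c < x := lt_of_le_of_ne hx.1 (fun h => hcS (h ▸ hxS))
      refine Finset.mem_image.2 ⟨x, hxC, ?_⟩
      show (if c < x then x else x + 2*π) = x
      rw [if_pos hcx]
    · have hy0 : (0:ℝ) ≤ x - 2*π := by linarith [not_lt.1 hlt]
      have hylt : x - 2*π < 2*π := by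
        have := hx.2
        have := hcIco.2
        linarith
      have hYy : deriv (curveY γ) (x - 2*π) = 0 := by
        have := hYper (x - 2*π)
        rw [show x - 2*π + 2*π = x by ring] at this
        rw [← this]; exact hy
      have hXy : deriv (curveX γ) (x - 2*π) < 0 := by
        have := hXper (x - 2*π)
        rw [show x - 2*π + 2*π = x by ring] at this
        rw [← this]; exact hxlt
      have hxS : x - 2*π ∈ S := (hS _ ⟨hy0, hylt⟩).1 hYy
      have hxC : x - 2*π ∈ C := Finset.mem_filter.2 ⟨hxS, hXy⟩
      have hyc : x - 2*π < c := by
        rcases lt_or_eq_of_le (by linarith [hx.2] : x - 2*π ≤ c) with h | h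
        · exact h
        · exact absurd (h ▸ hxS) hcS
      refine Finset.mem_image.2 ⟨x - 2*π, hxC, ?_⟩
      show (if c < x - 2*π then x - 2*π else x - 2*π + 2*π) = x
      rw [if_neg (not_lt.2 (le_of_lt hyc))]
      ring
  -- crossing data for every t in T
  have hTprop : ∀ t ∈ T, deriv (curveY γ) t = 0 ∧ deriv (curveX γ) t < 0 ∧
      deriv (deriv (curveY γ)) t ≠ 0 := by
    intro t ht
    obtain ⟨s, hsC, hst⟩ := Finset.mem_image.1 ht
    obtain ⟨_, _, hy, hx, hnd'⟩ := hCmem s hsC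
    by_cases hcs' : c < s
    · have : t = s := by rw [← hst]; show (if c < s then s else s + 2*π) = s; rw [if_pos hcs']
      rw [this]; exact ⟨hy, hx, hnd'⟩
    · have hts : t = s + 2*π := by
        rw [← hst]; show (if c < s then s else s + 2*π) = s + 2*π; rw [if_neg hcs']
      rw [hts, hYper, hXper, hY2per]
      exact ⟨hy, hx, hnd'⟩
  -- differentiability of y'
  have hY'diff : Differentiable ℝ (deriv (curveY γ)) := by
    have h2 : ContDiff ℝ 2 (curveY γ) := (contDiff_fst.comp contDiff_snd).comp hsm
    have h12 : (2 : WithTop ℕ∞) = 1 + 1 := by norm_num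
    rw [h12] at h2
    exact ((contDiff_succ_iff_deriv.mp h2).2.2).differentiable one_ne_zero
  -- apply the telescope
  have htel := telescope_jumps φ
    (fun t => if 0 < deriv (deriv (curveY γ)) t then (-1 : ℤ) else 1) T c (c + 2*π)
    (by linarith) ?_ ?_ ?_
  · -- conclude
    rw [hφshift c] at htel
    have hn' : n = ∑ t ∈ T, (fun t => if 0 < deriv (deriv (curveY γ)) t then (-1 : ℤ) else 1) t := by
      beta_reduce
      omega
    rw [hn']
    rw [hTdef, Finset.sum_image ?_]
    · apply Finset.sum_congr rfl
      intro s hsC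
      by_cases hcs' : c < s
      · simp only [hedef]
        rw [if_pos hcs']
      · simp only [hedef]
        rw [if_neg hcs', hY2per]
    · -- injectivity of e on C
      intro x hx y hy hxy
      obtain ⟨hx0, hx2, _, _, _⟩ := hCmem x hx
      obtain ⟨hy0, hy2, _, _, _⟩ := hCmem y hy
      simp only [hedef] at hxy
      by_cases h1 : c < x <;> by_cases h2 : c < y
      · rwa [if_pos h1, if_pos h2] at hxy
      · rw [if_pos h1, if_neg h2] at hxy; linarith
      · rw [if_neg h1, if_pos h2] at hxy; linarith
      · rw [if_neg h1, if_neg h2] at hxy; linarith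
  · -- T ⊆ Ioo c (c+2π)
    intro t ht
    obtain ⟨s, hsC, hst⟩ := Finset.mem_image.1 (Finset.mem_coe.1 ht)
    obtain ⟨hs0, hs2, _, _, _⟩ := hCmem s hsC
    by_cases hcs' : c < s
    · have : t = s := by rw [← hst]; show (if c < s then s else s + 2*π) = s; rw [if_pos hcs']
      rw [this]
      exact ⟨hcs', by linarith [hcIco.1]⟩
    · have : t = s + 2*π := by
        rw [← hst]; show (if c < s then s else s + 2*π) = s + 2*π; rw [if_neg hcs']
      rw [this]
      have hsc : s < c := lt_of_le_of_ne (not_lt.1 hcs')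
        (fun h => hcS (h ▸ (Finset.mem_filter.1 hsC).1))
      exact ⟨by linarith [hcIco.2], by linarith⟩
  · -- local constancy away from T
    intro x hx hxT
    have hnotcross : ¬(deriv (curveY γ) x = 0 ∧ deriv (curveX γ) x < 0) := by
      rintro ⟨h1, h2⟩
      exact hxT (hTmem x hx h1 h2)
    have hnotint : ∀ j : ℤ, (θ x + π)/(2*π) ≠ (j:ℝ) := by
      intro j hj
      have : θ x = j*(2*π) - π := by
        field_simp at hj
        linarith
      exact hnotcross (hodd_fwd x j this)
    set u₀ : ℝ := (θ x + π)/(2*π) with hu₀def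
    have hfl1 : (⌊u₀⌋ : ℝ) < u₀ := lt_of_le_of_ne (Int.floor_le u₀) (fun h => hnotint ⌊u₀⌋ h.symm)
    have hfl2 : u₀ < ⌊u₀⌋ + 1 := Int.lt_floor_add_one u₀
    have hcont2 : Continuous (fun s => (θ s + π)/(2*π)) :=
      (hθc.add continuous_const).div_const _
    have hev : ∀ᶠ s in nhds x, (θ s + π)/(2*π) ∈ Set.Ioo ((⌊u₀⌋:ℝ)) ((⌊u₀⌋:ℝ) + 1) :=
      (hcont2.tendsto x).eventually (isOpen_Ioo.eventually_mem ⟨hfl1, hfl2⟩)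
    filter_upwards [hev] with s hs
    show ⌊(θ s + π)/(2*π)⌋ = ⌊(θ x + π)/(2*π)⌋
    rw [Int.floor_eq_iff]
    exact ⟨le_of_lt hs.1, by exact_mod_cast hs.2⟩
  · -- crossing jumps
    intro t ht
    obtain ⟨hy, hxlt, hnd'⟩ := hTprop t ht
    obtain ⟨j, hj⟩ := hodd_bwd t hy hxlt
    exact crossing_local θ hθc (deriv (curveY γ))
      (fun s => ‖(deriv (curveX γ) s, deriv (curveY γ) s)‖) hrpos hsin t j hj
      (deriv (deriv (curveY γ)) t) (hY'diff t).hasDerivAt hnd'
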